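/- arXiv:2605.18485 — 2 statements merged into one kernel-verified Lean document; each statement's English description precedes it below -/
import Mathlib

section
/- Let K be a real 3×3 matrix with singular value decomposition K = UΣVᵀ where Σ = diag(σ₁,σ₂,σ₃) and σ₁ ≥ σ₂ ≥ σ₃ ≥ 0. Then max over S ∈ SO(3) of tr(K·S) equals σ₁ + σ₂ + sign(det(V·Uᵀ))·σ₃, and this maximum is attained at S⋆ = V·Λ·Uᵀ with Λ = diag(1,1,det(V·Uᵀ)). -/
set_option maxHeartbeats 1000000

open Matrix

def SO3 (S : Matrix (Fin 3) (Fin 3) ℝ) : Prop :=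
  S ∈ Matrix.orthogonalGroup (Fin 3) ℝ ∧ S.det = 1

section Aux

lemma orth_facts {A : Matrix (Fin 3) (Fin 3) ℝ}
    (hA : A ∈ Matrix.orthogonalGroup (Fin 3) ℝ) :
    Aᵀ * A = 1 ∧ A * Aᵀ = 1 := by
  have h := (Matrix.mem_orthogonalGroup_iff' (n := Fin 3) (R := ℝ)).mp hA
  exact ⟨h, mul_eq_one_comm.mp h⟩

lemma mul_orth {a b : Matrix (Fin 3) (Fin 3) ℝ}
    (ha : aᵀ * a = 1) (hb : bᵀ * b = 1) : (a * b)ᵀ * (a * b) = 1 := by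
  calc (a * b)ᵀ * (a * b) = bᵀ * (aᵀ * a) * b := by
        rw [Matrix.transpose_mul]; noncomm_ring
    _ = 1 := by rw [ha, Matrix.mul_one, hb]

lemma entry_sq_le (M : Matrix (Fin 3) (Fin 3) ℝ) (h : Mᵀ * M = 1) (i j : Fin 3) :
    M i j ^ 2 ≤ 1 := by
  have hc : ∑ k, M k j * M k j = 1 := by
    have := congrFun (congrFun h j) j
    simpa [Matrix.mul_apply, Matrix.one_apply] using this
  have hle := Finset.single_le_sum (f := fun k => M k j * M k j)
    (fun k _ => mul_self_nonneg (M k j)) (Finset.mem_univ i)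
  rw [hc] at hle
  have hle' : M i j * M i j ≤ 1 := hle
  nlinarith [hle']

lemma trace_diag_mul (σ : Fin 3 → ℝ) (M : Matrix (Fin 3) (Fin 3) ℝ) :
    (Matrix.diagonal σ * M).trace = σ 0 * M 0 0 + σ 1 * M 1 1 + σ 2 * M 2 2 := by
  simp [Matrix.trace, Matrix.diag, Matrix.mul_apply, Matrix.diagonal, Fin.sum_univ_three]

/-- A 3×3 orthogonal matrix with determinant -1 has trace at most 1. -/
lemma rot_trace_le_one (M : Matrix (Fin 3) (Fin 3) ℝ)
    (h : Mᵀ * M = 1) (hdet : M.det = -1) : M.trace ≤ 1 := by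
  have h' : M * Mᵀ = 1 := mul_eq_one_comm.mp h
  set A := M + 1 with hA
  have hAdet : A.det = 0 := by
    have e1 : M * (1 + Mᵀ) = A := by rw [mul_add, mul_one, h', hA, add_comm]
    have e2 : A.det = M.det * (1 + Mᵀ).det := by rw [← e1, Matrix.det_mul]
    have e3 : (1 + Mᵀ) = (1 + M)ᵀ := by rw [Matrix.transpose_add, Matrix.transpose_one]
    have e4 : (1 + M) = A := by rw [add_comm]
    rw [e3, Matrix.det_transpose, e4, hdet] at e2
    linarith
  set B := Aᵀ * A with hB
  have hBpsd : B.PosSemidef := by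
    have := Matrix.posSemidef_conjTranspose_mul_self A
    rwa [Matrix.conjTranspose_eq_transpose_of_trivial] at this
  have hH : B.IsHermitian := hBpsd.1
  have hBdet : B.det = 0 := by rw [hB, Matrix.det_mul, Matrix.det_transpose, hAdet, mul_zero]
  set D := (1 - M)ᵀ * (1 - M) with hD
  have hDpsd : D.PosSemidef := by
    have := Matrix.posSemidef_conjTranspose_mul_self (1 - M)
    rwa [Matrix.conjTranspose_eq_transpose_of_trivial] at this
  have hBD : B + D = 1 + 1 + 1 + 1 := by
    have e : B + D = Mᵀ * M + Mᵀ * M + 1 + 1 := by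
      rw [hB, hD, hA, Matrix.transpose_add, Matrix.transpose_sub, Matrix.transpose_one]
      noncomm_ring
    rw [e, h]
  -- eigenvalues of B
  have hnn : ∀ i, 0 ≤ hH.eigenvalues i := fun i => hBpsd.eigenvalues_nonneg i
  have hub : ∀ i, hH.eigenvalues i ≤ 4 := by
    intro i
    set v : Fin 3 → ℝ := ⇑(hH.eigenvectorBasis i) with hv
    have hmv : B *ᵥ v = hH.eigenvalues i • v := hH.mulVec_eigenvectorBasis i
    have hvne : v ≠ 0 := by
      intro hz
      exact (hH.eigenvectorBasis.orthonormal.ne_zero i) (by ext j; exact congrFun hz j)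
    have hcpos : 0 < v ⬝ᵥ v := by
      rcases lt_or_eq_of_le (Finset.sum_nonneg fun j _ => mul_self_nonneg (v j)) with hlt | heq
      · exact hlt
      · exact absurd (dotProduct_self_eq_zero.mp heq.symm) hvne
    have hDv : D *ᵥ v = (4 - hH.eigenvalues i) • v := by
      have : D = (B + D) - B := by abel
      rw [this, Matrix.sub_mulVec, hBD, hmv]
      funext j
      simp [Matrix.add_mulVec, Matrix.one_mulVec, Pi.smul_apply, smul_eq_mul]
      ring
    have h0 : 0 ≤ star v ⬝ᵥ (D *ᵥ v) := hDpsd.dotProduct_mulVec_nonneg v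
    rw [hDv] at h0
    have hsv : star v = v := by funext j; simp
    rw [hsv, dotProduct_smul] at h0
    have : 0 ≤ (4 - hH.eigenvalues i) * (v ⬝ᵥ v) := h0
    nlinarith
  have hsum : B.trace = hH.eigenvalues 0 + hH.eigenvalues 1 + hH.eigenvalues 2 := by
    have hs := hH.spectral_theorem
    calc B.trace
        = ((hH.eigenvectorUnitary : Matrix (Fin 3) (Fin 3) ℝ) *
            Matrix.diagonal (RCLike.ofReal ∘ hH.eigenvalues) *
            (star (hH.eigenvectorUnitary : Matrix (Fin 3) (Fin 3) ℝ))).trace := congrArg Matrix.trace hs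
      _ = ((star (hH.eigenvectorUnitary : Matrix (Fin 3) (Fin 3) ℝ)) *
            (hH.eigenvectorUnitary : Matrix (Fin 3) (Fin 3) ℝ) *
            Matrix.diagonal (RCLike.ofReal ∘ hH.eigenvalues)).trace := by
          rw [Matrix.trace_mul_cycle]
      _ = (Matrix.diagonal (RCLike.ofReal ∘ hH.eigenvalues)).trace := by
          rw [Unitary.coe_star_mul_self, one_mul]
      _ = hH.eigenvalues 0 + hH.eigenvalues 1 + hH.eigenvalues 2 := by
          simp [Matrix.trace_diagonal, Fin.sum_univ_three]
  have hprod : hH.eigenvalues 0 * hH.eigenvalues 1 * hH.eigenvalues 2 = 0 := by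
    have hp := hH.det_eq_prod_eigenvalues
    rw [hBdet] at hp
    have : (0 : ℝ) = hH.eigenvalues 0 * hH.eigenvalues 1 * hH.eigenvalues 2 := by
      simpa [Fin.prod_univ_three] using hp
    linarith
  have hBtrace : B.trace = 2 * M.trace + 6 := by
    have e : B = Mᵀ * M + (Mᵀ + M + 1) := by
      rw [hB, hA, Matrix.transpose_add, Matrix.transpose_one]
      noncomm_ring
    rw [e, h]
    simp [Matrix.trace_add, Matrix.trace_one, Matrix.trace_transpose]
    ring
  have hz : hH.eigenvalues 0 = 0 ∨ hH.eigenvalues 1 = 0 ∨ hH.eigenvalues 2 = 0 := by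
    rcases mul_eq_zero.mp hprod with h01 | h2
    · rcases mul_eq_zero.mp h01 with h0 | h1
      · exact Or.inl h0
      · exact Or.inr (Or.inl h1)
    · exact Or.inr (Or.inr h2)
  rcases hz with h0 | h1 | h2 <;>
    [ (have := hub 1; have := hub 2; linarith [hnn 1, hnn 2]);
      (have := hub 0; have := hub 2; linarith [hnn 0, hnn 2]);
      (have := hub 0; have := hub 1; linarith [hnn 0, hnn 1]) ]

end Aux

theorem procrustes_max
    (K U V : Matrix (Fin 3) (Fin 3) ℝ) (σ : Fin 3 → ℝ)
    (hU : U ∈ Matrix.orthogonalGroup (Fin 3) ℝ)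
    (hV : V ∈ Matrix.orthogonalGroup (Fin 3) ℝ)
    (hσ : σ 0 ≥ σ 1 ∧ σ 1 ≥ σ 2 ∧ σ 2 ≥ 0)
    (hK : K = U * Matrix.diagonal σ * Vᵀ) :
    IsGreatest {t : ℝ | ∃ S, SO3 S ∧ t = Matrix.trace (K * S)}
      (σ 0 + σ 1 + Real.sign ((V * Uᵀ).det) * σ 2) ∧
    SO3 (V * Matrix.diagonal ![1, 1, (V * Uᵀ).det] * Uᵀ) ∧
    Matrix.trace (K * (V * Matrix.diagonal ![1, 1, (V * Uᵀ).det] * Uᵀ)) =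
      σ 0 + σ 1 + Real.sign ((V * Uᵀ).det) * σ 2 := by
  obtain ⟨hσ01, hσ12, hσ2⟩ := hσ
  obtain ⟨hUt, hUU⟩ := orth_facts hU
  obtain ⟨hVt, hVV⟩ := orth_facts hV
  set ε := (V * Uᵀ).det with hε
  have hεVU : ε = V.det * U.det := by
    rw [hε, Matrix.det_mul, Matrix.det_transpose]
  have hdetU2 : U.det * U.det = 1 := by
    have := congrArg Matrix.det hUt
    rwa [Matrix.det_mul, Matrix.det_transpose, Matrix.det_one] at this
  have hdetV2 : V.det * V.det = 1 := by
    have := congrArg Matrix.det hVt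
    rwa [Matrix.det_mul, Matrix.det_transpose, Matrix.det_one] at this
  have hε2 : ε * ε = 1 := by
    rw [hεVU]
    calc V.det * U.det * (V.det * U.det) = (V.det * V.det) * (U.det * U.det) := by ring
      _ = 1 := by rw [hdetV2, hdetU2, one_mul]
  have hεcases : ε = 1 ∨ ε = -1 := by
    have : (ε - 1) * (ε + 1) = 0 := by linear_combination hε2
    rcases mul_eq_zero.mp this with h | h
    · left; linarith
    · right; linarith
  have hsign : Real.sign ε = ε := by
    rcases hεcases with h | h <;> rw [h]
    · exact Real.sign_one
    · exact Real.sign_of_neg (by norm_num)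
  -- the diagonal Λ
  set Λ := Matrix.diagonal ![1, 1, ε] with hΛ
  have hΛorth : Λᵀ * Λ = 1 := by
    rw [hΛ, Matrix.diagonal_transpose, Matrix.diagonal_mul_diagonal]
    have hf : (fun i => ![1, 1, ε] i * ![1, 1, ε] i) = fun _ => (1:ℝ) := by
      funext i; fin_cases i <;> simp [hε2]
    rw [hf, Matrix.diagonal_one]
  have hΛdet : Λ.det = ε := by
    rw [hΛ, Matrix.det_diagonal, Fin.prod_univ_three]
    simp
  set Sstar := V * Λ * Uᵀ with hSs
  have hSsorth : Sstarᵀ * Sstar = 1 := by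
    rw [hSs]
    exact mul_orth (mul_orth hVt hΛorth) (by rw [Matrix.transpose_transpose]; exact hUU)
  have hSsdet : Sstar.det = 1 := by
    rw [hSs, Matrix.det_mul, Matrix.det_mul, hΛdet, Matrix.det_transpose]
    calc V.det * ε * U.det = (V.det * U.det) * ε := by ring
      _ = ε * ε := by rw [← hεVU]
      _ = 1 := hε2
  have hSsSO3 : SO3 Sstar := by
    refine ⟨(Matrix.mem_orthogonalGroup_iff' (n := Fin 3) (R := ℝ)).mpr ?_, hSsdet⟩
    exact hSsorth
  -- trace at Sstar
  have htraceSs : Matrix.trace (K * Sstar) = σ 0 + σ 1 + ε * σ 2 := by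
    have e : K * Sstar = U * (Matrix.diagonal σ * Λ) * Uᵀ := by
      rw [hK, hSs]
      calc U * Matrix.diagonal σ * Vᵀ * (V * Λ * Uᵀ)
          = U * Matrix.diagonal σ * (Vᵀ * V) * Λ * Uᵀ := by noncomm_ring
        _ = U * (Matrix.diagonal σ * Λ) * Uᵀ := by rw [hVt]; noncomm_ring
    rw [e, Matrix.trace_mul_cycle, ← Matrix.mul_assoc, hUt, one_mul]
    rw [hΛ, Matrix.diagonal_mul_diagonal, Matrix.trace_diagonal, Fin.sum_univ_three]
    simp [mul_comm]
  -- general trace formula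
  have htr : ∀ S : Matrix (Fin 3) (Fin 3) ℝ,
      Matrix.trace (K * S) = σ 0 * (Vᵀ * S * U) 0 0 + σ 1 * (Vᵀ * S * U) 1 1
        + σ 2 * (Vᵀ * S * U) 2 2 := by
    intro S
    have e : Matrix.trace (K * S) = Matrix.trace (Matrix.diagonal σ * (Vᵀ * S * U)) := by
      rw [hK]
      calc Matrix.trace (U * Matrix.diagonal σ * Vᵀ * S)
          = Matrix.trace (U * (Matrix.diagonal σ * (Vᵀ * S))) := by
            rw [Matrix.mul_assoc, Matrix.mul_assoc]
        _ = Matrix.trace (Matrix.diagonal σ * (Vᵀ * S) * U) := Matrix.trace_mul_comm _ _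
        _ = Matrix.trace (Matrix.diagonal σ * (Vᵀ * S * U)) := by
            rw [Matrix.mul_assoc, Matrix.mul_assoc]
    rw [e, trace_diag_mul]
  constructor
  · constructor
    · -- membership
      exact ⟨Sstar, hSsSO3, by rw [htraceSs, hsign]⟩
    · -- upper bound
      rintro t ⟨S, ⟨hSo, hSdet⟩, rfl⟩
      obtain ⟨hSt, hSS⟩ := orth_facts hSo
      set M := Vᵀ * S * U with hM
      have hMorth : Mᵀ * M = 1 := by
        rw [hM]
        exact mul_orth (mul_orth (by rw [Matrix.transpose_transpose]; exact hVV) hSt) hUt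
      have hMdet : M.det = ε := by
        rw [hM, Matrix.det_mul, Matrix.det_mul, Matrix.det_transpose, hSdet, hεVU]
        ring
      have h00 := entry_sq_le M hMorth 0 0
      have h11 := entry_sq_le M hMorth 1 1
      have h22 := entry_sq_le M hMorth 2 2
      have h00' : M 0 0 ≤ 1 := by nlinarith
      have h11' : M 1 1 ≤ 1 := by nlinarith
      have h22' : M 2 2 ≤ 1 := by nlinarith
      rw [htr S, hsign]
      rcases hεcases with hcase | hcase
      · rw [hcase]
        nlinarith
      · rw [hcase]
        have htrM : M.trace ≤ 1 := rot_trace_le_one M hMorth (by rw [hMdet, hcase])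
        have htrM' : M 0 0 + M 1 1 + M 2 2 ≤ 1 := by
          have : M.trace = M 0 0 + M 1 1 + M 2 2 := by
            simp [Matrix.trace, Matrix.diag, Fin.sum_univ_three]
          linarith [htrM, this.symm.le, this.le]
        nlinarith
  · exact ⟨hSsSO3, by rw [htraceSs, hsign]⟩
end

section
/- For any real 3×3 matrix K, the value max_{S ∈ SO(3)} tr(K·S) depends only on the singular values of K together with the sign of det K; in particular it is uniquely determined by K. -/
open Matrix

namespace ProcrustesAux

abbrev O3 := Matrix.orthogonalGroup (Fin 3) ℝ

lemma star_eq (A : Matrix (Fin 3) (Fin 3) ℝ) : star A = Aᵀ := by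
  simp [Matrix.star_eq_conjTranspose]

lemma mem_iff (A : Matrix (Fin 3) (Fin 3) ℝ) : A ∈ O3 ↔ A * Aᵀ = 1 := by
  rw [Matrix.mem_orthogonalGroup_iff]

lemma transpose_mem {A : Matrix (Fin 3) (Fin 3) ℝ} (h : A ∈ O3) : Aᵀ ∈ O3 := by
  have := Unitary.star_mem h
  rwa [star_eq] at this

lemma det_sq {A : Matrix (Fin 3) (Fin 3) ℝ} (h : A ∈ O3) : A.det * A.det = 1 := by
  rw [mem_iff] at h
  have := congrArg Matrix.det h
  rwa [Matrix.det_mul, Matrix.det_transpose, Matrix.det_one] at this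

lemma det_mul_pm {A B : Matrix (Fin 3) (Fin 3) ℝ} (hA : A ∈ O3) (hB : B ∈ O3) :
    A.det * B.det = 1 ∨ A.det * B.det = -1 :=
  mul_self_eq_one_iff.mp (by rw [mul_mul_mul_comm, det_sq hA, det_sq hB, one_mul])

/-- The key reduction: the trace set for `U * D * Vᵀ` equals the trace set for
`D` over orthogonal matrices of determinant `U.det * V.det`. -/
lemma set_eq (U V : Matrix (Fin 3) (Fin 3) ℝ) (σ : Fin 3 → ℝ)
    (hU : U ∈ O3) (hV : V ∈ O3) :
    {t : ℝ | ∃ S, SO3 S ∧ t = Matrix.trace (U * Matrix.diagonal σ * Vᵀ * S)} =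
    {t : ℝ | ∃ T, T ∈ O3 ∧ T.det = U.det * V.det ∧
        t = Matrix.trace (Matrix.diagonal σ * T)} := by
  ext t
  constructor
  · rintro ⟨S, ⟨hSO, hSdet⟩, rfl⟩
    refine ⟨Vᵀ * S * U, mul_mem (mul_mem (transpose_mem hV) hSO) hU, ?_, ?_⟩
    · rw [Matrix.det_mul, Matrix.det_mul, Matrix.det_transpose, hSdet]
      ring
    · rw [show U * Matrix.diagonal σ * Vᵀ * S = U * (Matrix.diagonal σ * (Vᵀ * S)) by
        simp only [mul_assoc], Matrix.trace_mul_comm]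
      rw [show Matrix.diagonal σ * (Vᵀ * S) * U = Matrix.diagonal σ * (Vᵀ * S * U) by
        simp only [mul_assoc]]
  · rintro ⟨T, hT, hTdet, rfl⟩
    have hVV : Vᵀ * V = 1 := by
      have := transpose_mem hV
      rw [mem_iff] at this
      simpa using this
    have hUU : Uᵀ * U = 1 := by
      have := transpose_mem hU
      rw [mem_iff] at this
      simpa using this
    refine ⟨V * T * Uᵀ, ⟨mul_mem (mul_mem hV hT) (transpose_mem hU), ?_⟩, ?_⟩
    · rw [Matrix.det_mul, Matrix.det_mul, Matrix.det_transpose, hTdet]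
      have h : V.det * (U.det * V.det) * U.det = U.det * U.det * (V.det * V.det) := by ring
      rw [h, det_sq hU, det_sq hV, one_mul]
    · have e1 : U * Matrix.diagonal σ * Vᵀ * (V * T * Uᵀ)
          = U * (Matrix.diagonal σ * (T * Uᵀ)) := by
        simp only [mul_assoc]
        rw [← mul_assoc Vᵀ V, hVV, one_mul]
      have e2 : Matrix.diagonal σ * (T * Uᵀ) * U = Matrix.diagonal σ * T := by
        simp only [mul_assoc]
        rw [hUU, mul_one]
      calc (Matrix.diagonal σ * T).trace
          = (Matrix.diagonal σ * (T * Uᵀ) * U).trace := by rw [e2]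
        _ = (U * (Matrix.diagonal σ * (T * Uᵀ))).trace := Matrix.trace_mul_comm _ _
        _ = (U * Matrix.diagonal σ * Vᵀ * (V * T * Uᵀ)).trace := by rw [e1]

/-- If some singular value vanishes, the determinant constraint can be flipped. -/
lemma flip_subset (σ : Fin 3 → ℝ) (j : Fin 3) (hj : σ j = 0) (ε : ℝ) :
    {t : ℝ | ∃ T, T ∈ O3 ∧ T.det = ε ∧ t = Matrix.trace (Matrix.diagonal σ * T)} ⊆
    {t : ℝ | ∃ T, T ∈ O3 ∧ T.det = -ε ∧ t = Matrix.trace (Matrix.diagonal σ * T)} := by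
  set f : Fin 3 → ℝ := fun i => if i = j then -1 else 1 with hf
  have hff : (fun i => f i * f i) = fun _ => (1 : ℝ) := by
    funext i
    by_cases h : i = j <;> simp [hf, h]
  have hF : Matrix.diagonal f ∈ O3 := by
    rw [mem_iff, Matrix.diagonal_transpose, Matrix.diagonal_mul_diagonal, hff,
      Matrix.diagonal_one]
  have hFdet : (Matrix.diagonal f).det = -1 := by
    rw [Matrix.det_diagonal]
    fin_cases j <;> simp [hf, Fin.prod_univ_three]
  have hDF : Matrix.diagonal σ * Matrix.diagonal f = Matrix.diagonal σ := by
    rw [Matrix.diagonal_mul_diagonal,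
      show (fun i => σ i * f i) = σ from funext fun i => by
        by_cases h : i = j
        · subst h; simp [hj]
        · simp [hf, h]]
  rintro t ⟨T, hT, hTdet, rfl⟩
  refine ⟨Matrix.diagonal f * T, mul_mem hF hT, ?_, ?_⟩
  · rw [Matrix.det_mul, hFdet, hTdet]; ring
  · rw [← mul_assoc, hDF]

lemma flip_eq (σ : Fin 3 → ℝ) (j : Fin 3) (hj : σ j = 0) (ε : ℝ) :
    {t : ℝ | ∃ T, T ∈ O3 ∧ T.det = ε ∧ t = Matrix.trace (Matrix.diagonal σ * T)} =
    {t : ℝ | ∃ T, T ∈ O3 ∧ T.det = -ε ∧ t = Matrix.trace (Matrix.diagonal σ * T)} := by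
  apply Set.Subset.antisymm (flip_subset σ j hj ε)
  have := flip_subset σ j hj (-ε)
  rwa [neg_neg] at this

end ProcrustesAux

open ProcrustesAux in
/-- The maximum of `tr (K * S)` over `S ∈ SO(3)` depends only on the singular
values of `K` together with the sign of `det K`; in particular it is uniquely
determined by `K`. -/
theorem procrustes_value_unique
    (K K' U V U' V' : Matrix (Fin 3) (Fin 3) ℝ) (σ : Fin 3 → ℝ)
    (hU : U ∈ Matrix.orthogonalGroup (Fin 3) ℝ)
    (hV : V ∈ Matrix.orthogonalGroup (Fin 3) ℝ)
    (hU' : U' ∈ Matrix.orthogonalGroup (Fin 3) ℝ)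
    (hV' : V' ∈ Matrix.orthogonalGroup (Fin 3) ℝ)
    (hσ : ∀ i, 0 ≤ σ i)
    (hK : K = U * Matrix.diagonal σ * Vᵀ)
    (hK' : K' = U' * Matrix.diagonal σ * V'ᵀ)
    (hdet : Real.sign K.det = Real.sign K'.det) :
    sSup {t : ℝ | ∃ S, SO3 S ∧ t = Matrix.trace (K * S)} =
      sSup {t : ℝ | ∃ S, SO3 S ∧ t = Matrix.trace (K' * S)} := by
  subst hK hK'
  rw [set_eq U V σ hU hV, set_eq U' V' σ hU' hV']
  by_cases hz : ∃ j, σ j = 0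
  · obtain ⟨j, hj⟩ := hz
    rcases eq_or_ne (U.det * V.det) (U'.det * V'.det) with h | h
    · rw [h]
    · have hε := det_mul_pm hU hV
      have hε' := det_mul_pm hU' hV'
      have hne : U'.det * V'.det = -(U.det * V.det) := by
        rcases hε with h1 | h1 <;> rcases hε' with h2 | h2 <;> rw [h1, h2] <;>
          simp_all
      rw [hne, flip_eq σ j hj]
  · push_neg at hz
    have hpos : 0 < (Matrix.diagonal σ).det := by
      rw [Matrix.det_diagonal]
      exact Finset.prod_pos fun i _ => lt_of_le_of_ne (hσ i) (Ne.symm (hz i))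
    have key : ∀ (A B : Matrix (Fin 3) (Fin 3) ℝ), A ∈ O3 → B ∈ O3 →
        Real.sign (A * Matrix.diagonal σ * Bᵀ).det = A.det * B.det := by
      intro A B hA hB
      rw [Matrix.det_mul, Matrix.det_mul, Matrix.det_transpose]
      have hre : A.det * (Matrix.diagonal σ).det * B.det
          = (A.det * B.det) * (Matrix.diagonal σ).det := by ring
      rcases det_mul_pm hA hB with h | h
      · rw [hre, h, one_mul, Real.sign_of_pos hpos]
      · rw [hre, h, neg_one_mul, Real.sign_of_neg (by linarith)]
    rw [key U V hU hV, key U' V' hU' hV'] at hdet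
    rw [hdet]
end
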